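/- Two states of a deterministic weak Büchi automaton that can be merged by language-equivalence minimization must lie in SCCs of the same Löding rank; equivalently, if states p and q of a DWA recognize the same ω-language, then rank(p) = rank(q), where rank is any function on states constant on SCCs, monotonically non-increasing along transitions, and whose parity at a non-trivial SCC matches the acceptance of that SCC, chosen minimally. -/
import Mathlib


/-- A complete deterministic Büchi automaton over alphabet `A` with states `Q`. -/
structure DBA (Q A : Type) where
  init : Q
  step : Q → A → Q
  F : Set Q

namespace DBA

variable {Q A : Type}

/-- Extension of the transition function to finite words. -/
def stepList (M : DBA Q A) : Q → List A → Q
  | q, [] => q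
  | q, a :: u => M.stepList (M.step q a) u

/-- `q` is reachable from `p`. -/
def Reach (M : DBA Q A) (p q : Q) : Prop := ∃ u : List A, M.stepList p u = q

/-- `p` and `q` are in the same strongly connected component. -/
def SameSCC (M : DBA Q A) (p q : Q) : Prop := M.Reach p q ∧ M.Reach q p

/-- `q` lies on a cycle (i.e. its SCC is non-trivial). -/
def OnCycle (M : DBA Q A) (q : Q) : Prop := ∃ u : List A, u ≠ [] ∧ M.stepList q u = q

/-- Weakness: every SCC is entirely accepting or entirely rejecting. -/
def Weak (M : DBA Q A) : Prop := ∀ p q, M.SameSCC p q → (p ∈ M.F ↔ q ∈ M.F)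

/-- The (unique) run on `w` starting in state `q`. -/
def runFrom (M : DBA Q A) (q : Q) (w : ℕ → A) : ℕ → Q
  | 0 => q
  | n + 1 => M.step (M.runFrom q w n) (w n)

/-- Büchi acceptance from state `q`: the run visits `F` infinitely often. -/
def AcceptsFrom (M : DBA Q A) (q : Q) (w : ℕ → A) : Prop :=
  ∀ N, ∃ n, N ≤ n ∧ M.runFrom q w n ∈ M.F

/-- Büchi acceptance from the initial state. -/
def Accepts (M : DBA Q A) (w : ℕ → A) : Prop := M.AcceptsFrom M.init w

/-- The ω-language of state `q`. -/
def LangFrom (M : DBA Q A) (q : Q) : Set (ℕ → A) := {w | M.AcceptsFrom q w}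

/-- The ω-language of the automaton. -/
def Lang (M : DBA Q A) : Set (ℕ → A) := {w | M.Accepts w}

/-- `q` is an accepting sink. -/
def AcceptingSink (M : DBA Q A) (q : Q) : Prop := q ∈ M.F ∧ ∀ a, M.step q a = q

/-- Minimality: all states are reachable and no two distinct states are
language-equivalent. -/
def Minimal (M : DBA Q A) : Prop :=
  (∀ q, M.Reach M.init q) ∧ ∀ p q, M.LangFrom p = M.LangFrom q → p = q

/-- Product automaton with a chosen acceptance set. -/
def prod (M₁ : DBA Q A) {Q₂ : Type} (M₂ : DBA Q₂ A) (Fp : Set (Q × Q₂)) :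
    DBA (Q × Q₂) A :=
  ⟨(M₁.init, M₂.init), fun q a => (M₁.step q.1 a, M₂.step q.2 a), Fp⟩

/-- A ranking in the sense of Löding: constant on SCCs, non-increasing along
transitions, and with parity matching acceptance on states lying on cycles. -/
def IsRanking (M : DBA Q A) (r : Q → ℕ) : Prop :=
  (∀ p q, M.SameSCC p q → r p = r q) ∧
  (∀ q a, r (M.step q a) ≤ r q) ∧
  (∀ q, M.OnCycle q → (Even (r q) ↔ q ∈ M.F))

end DBA

/-- Recognizability by a (finite) deterministic weak Büchi automaton. -/
def DWARecognizable {A : Type} (L : Set (ℕ → A)) : Prop :=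
  ∃ (Q : Type) (_ : Fintype Q) (M : DBA Q A), M.Weak ∧ ∀ w, M.Accepts w ↔ w ∈ L

/-- Nondeterministic Büchi automata. -/
structure NBA (Q A : Type) where
  init : Set Q
  step : Q → A → Set Q
  F : Set Q

/-- Acceptance for nondeterministic Büchi automata. -/
def NBA.Accepts {Q A : Type} (M : NBA Q A) (w : ℕ → A) : Prop :=
  ∃ r : ℕ → Q, r 0 ∈ M.init ∧ (∀ n, r (n + 1) ∈ M.step (r n) (w n)) ∧
    ∀ N, ∃ n, N ≤ n ∧ r n ∈ M.F

/-- ω-regularity: recognizability by a finite nondeterministic Büchi automaton. -/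
def OmegaRegular {A : Type} (L : Set (ℕ → A)) : Prop :=
  ∃ (Q : Type) (_ : Fintype Q) (M : NBA Q A), ∀ w, M.Accepts w ↔ w ∈ L

/-- Guarantee languages: `W·Σ^ω` for a set `W` of finite words. -/
def IsGuaranteeLang {A : Type} (L : Set (ℕ → A)) : Prop :=
  ∃ W : Set (List A), L = {w | ∃ n : ℕ, (List.ofFn fun i : Fin n => w i) ∈ W}

/-- Safety languages: complements of guarantee languages. -/
def IsSafetyLang {A : Type} (L : Set (ℕ → A)) : Prop := IsGuaranteeLang Lᶜ

/-- Finite Boolean combinations (union, intersection, complement) of a family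
of languages. -/
inductive BoolCombOf {α : Type} (B : Set (Set α)) : Set α → Prop
  | base {L} : L ∈ B → BoolCombOf B L
  | compl {L} : BoolCombOf B L → BoolCombOf B Lᶜ
  | union {L₁ L₂} : BoolCombOf B L₁ → BoolCombOf B L₂ → BoolCombOf B (L₁ ∪ L₂)
  | inter {L₁ L₂} : BoolCombOf B L₁ → BoolCombOf B L₂ → BoolCombOf B (L₁ ∩ L₂)

namespace DBA
variable {Q A : Type}

lemma stepList_append (M : DBA Q A) (p : Q) (u v : List A) :
    M.stepList p (u ++ v) = M.stepList (M.stepList p u) v := by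
  induction u generalizing p with
  | nil => rfl
  | cons a u ih => simp [stepList, ih]

lemma runFrom_cons (M : DBA Q A) (p : Q) (a : A) (w : ℕ → A) (n : ℕ) :
    M.runFrom p (fun k => Nat.casesOn k a w) (n + 1) = M.runFrom (M.step p a) w n := by
  induction n with
  | zero => rfl
  | succ n ih => exact congrArg (fun s => M.step s (w n)) ih

lemma acceptsFrom_cons (M : DBA Q A) (p : Q) (a : A) (w : ℕ → A) :
    M.AcceptsFrom (M.step p a) w ↔ M.AcceptsFrom p (fun k => Nat.casesOn k a w) := by
  constructor
  · intro h N
    obtain ⟨n, hn, hF⟩ := h N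
    exact ⟨n + 1, le_trans hn (Nat.le_succ n), by rwa [M.runFrom_cons]⟩
  · intro h N
    obtain ⟨n, hn, hF⟩ := h (N + 1)
    obtain ⟨m, rfl⟩ : ∃ m, n = m + 1 := ⟨n - 1, by omega⟩
    exact ⟨m, by omega, by rwa [M.runFrom_cons] at hF⟩

lemma langFrom_step (M : DBA Q A) {p q : Q} (h : M.LangFrom p = M.LangFrom q) (a : A) :
    M.LangFrom (M.step p a) = M.LangFrom (M.step q a) := by
  ext w
  have := Set.ext_iff.1 h (fun k => Nat.casesOn k a w)
  simpa [LangFrom, acceptsFrom_cons] using this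

lemma langFrom_stepList (M : DBA Q A) {p q : Q} (h : M.LangFrom p = M.LangFrom q) (u : List A) :
    M.LangFrom (M.stepList p u) = M.LangFrom (M.stepList q u) := by
  induction u generalizing p q with
  | nil => exact h
  | cons a u ih => exact ih (M.langFrom_step h a)

lemma rank_stepList_le (M : DBA Q A) {r : Q → ℕ} (hr : M.IsRanking r) (x : Q) (u : List A) :
    r (M.stepList x u) ≤ r x := by
  induction u generalizing x with
  | nil => exact le_refl _
  | cons a u ih => exact le_trans (ih _) (hr.2.1 x a)

end DBA

namespace DBA
variable {Q A : Type}

/-- `k`-fold concatenation of a finite word. -/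
def uPow (u : List A) : ℕ → List A
  | 0 => []
  | k + 1 => u ++ uPow u k

lemma uPow_ne_nil {u : List A} (hu : u ≠ []) (k : ℕ) : uPow u (k + 1) ≠ [] := by
  simp [uPow, hu]

lemma stepList_uPow_self (M : DBA Q A) {x : Q} {u : List A} (hx : M.stepList x u = x) (k : ℕ) :
    M.stepList x (uPow u k) = x := by
  induction k with
  | zero => rfl
  | succ k ih => rw [uPow, stepList_append, hx, ih]

lemma stepList_uPow_iterate (M : DBA Q A) (z : Q) (u : List A) (k : ℕ) :
    M.stepList z (uPow u k) = (fun y => M.stepList y u)^[k] z := by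
  induction k generalizing z with
  | zero => rfl
  | succ k ih =>
    rw [uPow, stepList_append, Function.iterate_succ_apply]
    exact ih _

lemma runFrom_periodic (M : DBA Q A) (x : Q) (u : List A) (hu : u ≠ [])
    (hx : M.stepList x u = x) (w : ℕ → A)
    (hwdef : ∀ n, w n = u.get ⟨n % u.length, Nat.mod_lt _ (List.length_pos_iff.2 hu)⟩) :
    ∀ n, M.runFrom x w n = M.stepList x (u.take (n % u.length)) := by
  have hm : 0 < u.length := List.length_pos_iff.2 hu
  intro n
  induction n with
  | zero => simp [runFrom, Nat.zero_mod, stepList]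
  | succ n ih =>
    have hlt : n % u.length < u.length := Nat.mod_lt _ hm
    have hstep : M.runFrom x w (n + 1)
        = M.stepList x (u.take (n % u.length) ++ [u.get ⟨n % u.length, hlt⟩]) := by
      rw [stepList_append]
      show M.step (M.runFrom x w n) (w n) = _
      rw [ih, hwdef n]
      rfl
    have hconcat : u.take (n % u.length) ++ [u.get ⟨n % u.length, hlt⟩]
        = u.take (n % u.length + 1) := by
      simpa [List.concat_eq_append] using List.take_concat_get u (n % u.length) hlt
    rw [hstep, hconcat]
    have hmod : (n + 1) % u.length = (n % u.length + 1) % u.length := by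
      conv_lhs => rw [Nat.add_mod]
      rw [Nat.add_mod (n % u.length) 1, Nat.mod_mod_of_dvd _ dvd_rfl]
    by_cases hcase : n % u.length + 1 = u.length
    · rw [hcase, List.take_length, hx, hmod, hcase, Nat.mod_self]
      rfl
    · have : n % u.length + 1 < u.length := lt_of_le_of_ne hlt hcase
      rw [hmod, Nat.mod_eq_of_lt this]

/-- Acceptance of the periodic word on a cycle through `x` matches membership in `F`. -/
lemma acceptsFrom_periodic (M : DBA Q A) (hw : M.Weak) (x : Q) (u : List A) (hu : u ≠ [])
    (hx : M.stepList x u = x) (w : ℕ → A)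
    (hwdef : ∀ n, w n = u.get ⟨n % u.length, Nat.mod_lt _ (List.length_pos_iff.2 hu)⟩) :
    M.AcceptsFrom x w ↔ x ∈ M.F := by
  have hm : 0 < u.length := List.length_pos_iff.2 hu
  have hrun := M.runFrom_periodic x u hu hx w hwdef
  constructor
  · intro h
    obtain ⟨n, -, hF⟩ := h 0
    rw [hrun n] at hF
    have hscc : M.SameSCC x (M.stepList x (u.take (n % u.length))) := by
      refine ⟨⟨_, rfl⟩, ⟨u.drop (n % u.length), ?_⟩⟩
      rw [← stepList_append, List.take_append_drop, hx]
    exact (hw _ _ hscc).2 hF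
  · intro hF N
    refine ⟨N * u.length, Nat.le_mul_of_pos_right N hm, ?_⟩
    rw [hrun, Nat.mul_mod_left]
    simpa [stepList] using hF

end DBA



section Stmt15Aux
open DBA
/-- in a DWA, language-equivalent states have the same minimal
Löding rank: if `r` is a pointwise-minimal ranking (constant on SCCs,
non-increasing along transitions, parity matching acceptance on cycles) and
`p`, `q` recognize the same ω-language, then `r p = r q`. -/
theorem stmt15 {Q A : Type} [Fintype Q] (M : DBA Q A) (hw : M.Weak)
    (r : Q → ℕ) (hr : M.IsRanking r)
    (hmin : ∀ r' : Q → ℕ, M.IsRanking r' → ∀ q, r q ≤ r' q)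
    (p q : Q) (hL : M.LangFrom p = M.LangFrom q) :
    r p = r q := by
  classical
  set r' : Q → ℕ := fun x => sInf (r '' {y | M.LangFrom y = M.LangFrom x}) with hr'def
  have hne : ∀ x, (r '' {y | M.LangFrom y = M.LangFrom x}).Nonempty :=
    fun x => ⟨r x, x, rfl, rfl⟩
  have hle : ∀ x, r' x ≤ r x := fun x => Nat.sInf_le ⟨x, rfl, rfl⟩
  have hmem : ∀ x, ∃ y, M.LangFrom y = M.LangFrom x ∧ r y = r' x := by
    intro x
    obtain ⟨y, hy, hry⟩ := Nat.sInf_mem (hne x)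
    exact ⟨y, hy, hry⟩
  have hreach : ∀ a b, M.Reach a b → r' b ≤ r' a := by
    intro a b ⟨u, hu⟩
    obtain ⟨y, hy, hry⟩ := hmem a
    have hlang : M.LangFrom (M.stepList y u) = M.LangFrom b := by
      rw [M.langFrom_stepList hy, hu]
    calc r' b ≤ r (M.stepList y u) := Nat.sInf_le ⟨_, hlang, rfl⟩
      _ ≤ r y := M.rank_stepList_le hr y u
      _ = r' a := hry
  have hrank' : M.IsRanking r' := by
    refine ⟨fun a b hscc => le_antisymm (hreach b a hscc.2) (hreach a b hscc.1),
      fun x a => hreach x (M.step x a) ⟨[a], rfl⟩, ?_⟩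
    intro x ⟨u, hu, hx⟩
    obtain ⟨y, hy, hry⟩ := hmem x
    set g : Q → Q := fun z => M.stepList z u with hg
    obtain ⟨i, j, hij, hgij⟩ :=
      Finite.exists_ne_map_eq_of_infinite (fun k : ℕ => g^[k] y)
    wlog hlt : i < j generalizing i j
    · exact this j i hij.symm hgij.symm (by omega)
    set c : ℕ := j - i with hc
    have hc1 : c = (j - i - 1) + 1 := by omega
    set y'' : Q := g^[i] y with hy''
    have hy''step : y'' = M.stepList y (uPow u i) := (M.stepList_uPow_iterate y u i).symm
    have hcyc : M.stepList y'' (uPow u c) = y'' := by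
      rw [M.stepList_uPow_iterate, hy'', ← Function.iterate_add_apply]
      have : c + i = j := by omega
      rw [this]
      exact hgij.symm
    have hlang'' : M.LangFrom y'' = M.LangFrom x := by
      rw [hy''step, M.langFrom_stepList hy, M.stepList_uPow_self hx]
    have hr'' : r y'' = r' x := by
      refine le_antisymm ?_ (Nat.sInf_le ⟨y'', hlang'', rfl⟩)
      rw [hy''step, ← hry]
      exact M.rank_stepList_le hr y (uPow u i)
    set v : List A := uPow u c with hv
    have hvne : v ≠ [] := by rw [hv, hc1]; exact uPow_ne_nil hu _
    have hxv : M.stepList x v = x := M.stepList_uPow_self hx c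
    set w : ℕ → A := fun n => v.get ⟨n % v.length, Nat.mod_lt _ (List.length_pos_iff.2 hvne)⟩
      with hwdef
    have h1 : M.AcceptsFrom x w ↔ x ∈ M.F :=
      M.acceptsFrom_periodic hw x v hvne hxv w (fun n => rfl)
    have h2 : M.AcceptsFrom y'' w ↔ y'' ∈ M.F :=
      M.acceptsFrom_periodic hw y'' v hvne hcyc w (fun n => rfl)
    have h3 : M.AcceptsFrom y'' w ↔ M.AcceptsFrom x w := by
      have := Set.ext_iff.1 hlang'' w
      exact this
    have hFF : (y'' ∈ M.F) ↔ (x ∈ M.F) := by rw [← h2, h3, h1]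
    rw [show r' x = r y'' from hr''.symm]
    exact (hr.2.2 y'' ⟨v, hvne, hcyc⟩).trans hFF
  have heq : ∀ x, r x = r' x := fun x => le_antisymm (hmin r' hrank' x) (hle x)
  have hset : {y | M.LangFrom y = M.LangFrom p} = {y | M.LangFrom y = M.LangFrom q} := by
    rw [hL]
  rw [heq p, heq q, hr'def]
  simp only
  rw [hset]

end Stmt15Aux
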